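/- Occupancy ratio bound for the max-Rényi exploration mixture (Lemma B.3). In the finite episodic MDP setting, fix α ∈ (0,1) and δ > 0. For each t ∈ {1,…,H}, let π^{(t)} be a policy maximizing the Rényi entropy H_α(d_t^π) over all policies π, and define μ_h(s,a) = (1/H) Σ_{t=1}^H d_h^{π^{(t)}}(s,a). Then for every step h ∈ {1,…,H}, every (s,a) ∈ 𝒮×𝒜, and every policy π' with d_h^{π'}(s,a) ≥ δ, it holds that d_h^{π'}(s,a) ≤ (S·A·H / δ^{α/(1−α)}) · μ_h(s,a). -/

import Mathlib

open Finset

/-- A (non-stationary) policy for a finite episodic MDP. -/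
structure EpiPolicy (S A : Type) [Fintype A] where
  p : S → ℕ → A → ℝ
  nonneg : ∀ s h a, 0 ≤ p s h a
  sum_one : ∀ s h, ∑ a, p s h a = 1

/-- Step-`h` state-action occupancy measure (0-indexed: `occ P μ π h` is `d_{h+1}^π`). -/
noncomputable def occ {S A : Type} [Fintype S] [Fintype A]
    (P : ℕ → S → A → S → ℝ) (μ : S → ℝ) (π : EpiPolicy S A) : ℕ → S × A → ℝ
  | 0 => fun q => μ q.1 * π.p q.1 0 q.2
  | h + 1 => fun q =>
      ∑ q' : S × A, occ P μ π h q' * P h q'.1 q'.2 q.1 * π.p q.1 (h + 1) q.2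

/-- Rényi entropy of order `α` of a distribution on a finite type (real powers). -/
noncomputable def renyiEnt {X : Type} [Fintype X] (α : ℝ) (d : X → ℝ) : ℝ :=
  (1 / (1 - α)) * Real.log (∑ x, d x ^ α)

/-- Tangent-line (Bernoulli-type) inequality for concave `rpow`. -/
lemma rpow_tangent_le {α a b : ℝ} (hα0 : 0 ≤ α) (hα1 : α ≤ 1) (ha : 0 < a) (hb : 0 ≤ b) :
    b ^ α ≤ a ^ α + α * a ^ (α - 1) * (b - a) := by
  have key : (b / a) ^ α * (1:ℝ) ^ (1 - α) ≤ α * (b / a) + (1 - α) * 1 :=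
    Real.geom_mean_le_arith_mean2_weighted hα0 (by linarith) (div_nonneg hb ha.le)
      zero_le_one (by ring)
  rw [Real.one_rpow, mul_one, mul_one] at key
  have haα : (0:ℝ) < a ^ α := Real.rpow_pos_of_pos ha α
  have h1 : b ^ α = a ^ α * (b / a) ^ α := by
    rw [Real.div_rpow hb ha.le, mul_div_cancel₀ _ haα.ne']
  calc b ^ α = a ^ α * (b / a) ^ α := h1
    _ ≤ a ^ α * (α * (b / a) + (1 - α)) := by
        exact mul_le_mul_of_nonneg_left key haα.le
    _ = a ^ α + α * a ^ (α - 1) * (b - a) := by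
        rw [Real.rpow_sub ha, Real.rpow_one]
        field_simp
        ring

lemma occ_nonneg {S A : Type} [Fintype S] [Fintype A]
    (P : ℕ → S → A → S → ℝ) (μ : S → ℝ) (π : EpiPolicy S A)
    (hP : ∀ h s a s', 0 ≤ P h s a s') (hμ : ∀ s, 0 ≤ μ s) :
    ∀ h q, 0 ≤ occ P μ π h q := by
  intro h
  induction h with
  | zero => exact fun q => mul_nonneg (hμ q.1) (π.nonneg _ _ _)
  | succ n ih =>
    intro q
    exact Finset.sum_nonneg fun q' _ =>
      mul_nonneg (mul_nonneg (ih q') (hP n q'.1 q'.2 q.1)) (π.nonneg _ _ _)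

lemma occ_sum_one {S A : Type} [Fintype S] [Fintype A]
    (P : ℕ → S → A → S → ℝ) (μ : S → ℝ) (π : EpiPolicy S A)
    (hP : ∀ h s a, ∑ s', P h s a s' = 1) (hμ : ∑ s, μ s = 1) :
    ∀ h, ∑ q, occ P μ π h q = 1 := by
  intro h
  induction h with
  | zero =>
    show ∑ q : S × A, μ q.1 * π.p q.1 0 q.2 = 1
    rw [Fintype.sum_prod_type]
    simp only [← Finset.mul_sum, π.sum_one, mul_one]
    exact hμ
  | succ n ih =>
    show ∑ q : S × A, ∑ q' : S × A,
        occ P μ π n q' * P n q'.1 q'.2 q.1 * π.p q.1 (n+1) q.2 = 1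
    rw [Fintype.sum_prod_type]
    have step1 : ∀ s : S,
        ∑ a : A, ∑ q' : S × A, occ P μ π n q' * P n q'.1 q'.2 s * π.p s (n+1) a
          = ∑ q' : S × A, occ P μ π n q' * P n q'.1 q'.2 s := by
      intro s
      rw [Finset.sum_comm]
      refine Finset.sum_congr rfl fun q' _ => ?_
      rw [← Finset.mul_sum, π.sum_one, mul_one]
    simp only [step1]
    rw [Finset.sum_comm]
    simp only [← Finset.mul_sum, hP, mul_one]
    exact ih

lemma mix_occ {S A : Type} [Fintype S] [Fintype A] [Nonempty A]
    (P : ℕ → S → A → S → ℝ) (μ : S → ℝ)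
    (hP : ∀ h s a s', 0 ≤ P h s a s') (hμ : ∀ s, 0 ≤ μ s)
    (π π' : EpiPolicy S A) (l : ℝ) (hl0 : 0 ≤ l) (hl1 : l ≤ 1) :
    ∃ πm : EpiPolicy S A, ∀ h q,
      occ P μ πm h q = (1 - l) * occ P μ π h q + l * occ P μ π' h q := by
  classical
  set m : ℕ → S × A → ℝ :=
    fun h q => (1 - l) * occ P μ π h q + l * occ P μ π' h q with hm
  have hmnn : ∀ h q, 0 ≤ m h q := fun h q =>
    add_nonneg (mul_nonneg (by linarith) (occ_nonneg P μ π hP hμ h q))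
      (mul_nonneg hl0 (occ_nonneg P μ π' hP hμ h q))
  have hcardA : (0:ℝ) < (Fintype.card A : ℝ) := by exact_mod_cast Fintype.card_pos
  have hpnn : ∀ (s : S) (h : ℕ) (a : A), 0 ≤
      (if 0 < ∑ b, m h (s, b) then m h (s, a) / ∑ b, m h (s, b)
       else (Fintype.card A : ℝ)⁻¹) := by
    intro s h a
    split_ifs with hpos
    · exact div_nonneg (hmnn h (s, a)) hpos.le
    · exact inv_nonneg.mpr hcardA.le
  have hpsum : ∀ (s : S) (h : ℕ), (∑ a,
      if 0 < ∑ b, m h (s, b) then m h (s, a) / ∑ b, m h (s, b)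
      else (Fintype.card A : ℝ)⁻¹) = 1 := by
    intro s h
    split_ifs with hpos
    · rw [← Finset.sum_div, div_self hpos.ne']
    · rw [Finset.sum_const, Finset.card_univ, nsmul_eq_mul, mul_inv_cancel₀ hcardA.ne']
  obtain ⟨πm, hπmp⟩ : ∃ πm : EpiPolicy S A, ∀ s h a, πm.p s h a =
      (if 0 < ∑ b, m h (s, b) then m h (s, a) / ∑ b, m h (s, b)
       else (Fintype.card A : ℝ)⁻¹) :=
    ⟨⟨_, hpnn, hpsum⟩, fun _ _ _ => rfl⟩
  refine ⟨πm, ?_⟩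
  intro h
  induction h with
  | zero =>
    intro q
    obtain ⟨s, a⟩ := q
    show μ s * πm.p s 0 a = m 0 (s, a)
    have hsum0 : ∑ b, m 0 (s, b) = μ s := by
      simp only [hm]
      show ∑ b, ((1 - l) * (μ s * π.p s 0 b) + l * (μ s * π'.p s 0 b)) = μ s
      rw [Finset.sum_add_distrib]
      simp only [← Finset.mul_sum, π.sum_one, π'.sum_one]
      ring
    rw [hπmp, hsum0]
    rcases (hμ s).lt_or_eq with hs | hs
    · rw [if_pos hs, mul_comm, div_mul_cancel₀ _ hs.ne']
    · have hz : m 0 (s, a) = 0 := by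
        simp only [hm]
        show (1 - l) * (μ s * π.p s 0 a) + l * (μ s * π'.p s 0 a) = 0
        rw [← hs]; ring
      rw [hz, ← hs, if_neg (lt_irrefl 0), zero_mul]
  | succ n ih =>
    intro q
    obtain ⟨s, a⟩ := q
    have hocc : ∀ (ρ : EpiPolicy S A) (b : A), occ P μ ρ (n+1) (s, b)
        = (∑ q' : S × A, occ P μ ρ n q' * P n q'.1 q'.2 s) * ρ.p s (n+1) b := by
      intro ρ b
      show (∑ q' : S × A, occ P μ ρ n q' * P n q'.1 q'.2 s * ρ.p s (n+1) b) = _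
      rw [← Finset.sum_mul]
    set F : ℝ := ∑ q' : S × A, m n q' * P n q'.1 q'.2 s with hF
    have hsumn : ∑ b, m (n+1) (s, b) = F := by
      have e1 : ∀ b : A, m (n+1) (s, b) =
          (1 - l) * ((∑ q' : S × A, occ P μ π n q' * P n q'.1 q'.2 s) * π.p s (n+1) b)
          + l * ((∑ q' : S × A, occ P μ π' n q' * P n q'.1 q'.2 s) * π'.p s (n+1) b) := by
        intro b
        simp only [hm, hocc]
      simp only [e1]
      rw [Finset.sum_add_distrib]
      simp only [← Finset.mul_sum, π.sum_one, π'.sum_one]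
      rw [hF]
      have e2 : ∀ q' : S × A, m n q' * P n q'.1 q'.2 s =
          (1 - l) * (occ P μ π n q' * P n q'.1 q'.2 s)
          + l * (occ P μ π' n q' * P n q'.1 q'.2 s) := by
        intro q'; simp only [hm]; ring
      simp only [e2]
      rw [Finset.sum_add_distrib]
      simp only [← Finset.mul_sum]
      ring
    have hFeq : (∑ q' : S × A, occ P μ πm n q' * P n q'.1 q'.2 s) = F := by
      rw [hF]
      exact Finset.sum_congr rfl fun q' _ => by rw [ih q']
    rw [hocc πm a, hFeq, hπmp, hsumn]
    rcases lt_or_ge 0 F with hpos | hneg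
    · rw [if_pos hpos, mul_comm, div_mul_cancel₀ _ hpos.ne']
    · have hF0 : F = 0 := le_antisymm hneg (by
        rw [← hsumn]; exact Finset.sum_nonneg fun b _ => hmnn _ _)
      have hma : m (n+1) (s, a) = 0 := by
        have := (Finset.sum_eq_zero_iff_of_nonneg
          (fun b _ => hmnn (n+1) (s, b))).mp (hsumn.trans hF0) a (Finset.mem_univ a)
        exact this
      rw [hF0, zero_mul]
      exact hma.symm

lemma key_ineq {X : Type} [Fintype X] (α δ : ℝ) (hα : α ∈ Set.Ioo (0:ℝ) 1) (hδ : 0 < δ)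
    (d d' : X → ℝ) (hd0 : ∀ x, 0 ≤ d x) (hd'0 : ∀ x, 0 ≤ d' x)
    (hd1 : ∑ x, d x = 1)
    (hφ : ∀ l ∈ Set.Ioo (0:ℝ) 1, ∑ x, ((1-l) * d x + l * d' x) ^ α ≤ ∑ x, d x ^ α)
    (q : X) (hq : δ ≤ d' q) :
    d' q * δ ^ (α/(1-α)) ≤ (Fintype.card X : ℝ) * d q := by
  classical
  obtain ⟨hα0, hα1⟩ := hα
  have h1α : (0:ℝ) < 1 - α := by linarith
  have hd'q : 0 < d' q := lt_of_lt_of_le hδ hq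
  set K : ℝ := ∑ x, d x ^ α with hK
  have hK0 : 0 ≤ K := Finset.sum_nonneg fun x _ => Real.rpow_nonneg (hd0 x) _
  -- pointwise tangent bound, valid for every x
  have hpt : ∀ l ∈ Set.Ioo (0:ℝ) 1, ∀ x : X,
      d x ^ α - ((1-l) * d x + l * d' x) ^ α ≤ α * l * (1-l) ^ (α-1) * d x ^ α := by
    intro l hl x
    obtain ⟨hl0, hl1⟩ := hl
    have h1l : (0:ℝ) < 1 - l := by linarith
    have hrpos : 0 ≤ α * l * (1-l) ^ (α-1) * d x ^ α :=
      mul_nonneg (mul_nonneg (mul_nonneg hα0.le hl0.le)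
        (Real.rpow_nonneg h1l.le _)) (Real.rpow_nonneg (hd0 x) _)
    set mx : ℝ := (1-l) * d x + l * d' x with hmx
    have hmx0 : 0 ≤ mx := add_nonneg (mul_nonneg h1l.le (hd0 x)) (mul_nonneg hl0.le (hd'0 x))
    rcases (hd0 x).lt_or_eq with hdx | hdx
    · -- d x > 0
      have hmge : (1-l) * d x ≤ mx := le_add_of_nonneg_right (mul_nonneg hl0.le (hd'0 x))
      have h1ld : 0 < (1-l) * d x := mul_pos h1l hdx
      have hmxpos : 0 < mx := lt_of_lt_of_le h1ld hmge
      have hb := rpow_tangent_le hα0.le hα1.le hmxpos (hd0 x)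
      have hdm : d x - mx = l * (d x - d' x) := by rw [hmx]; ring
      rcases le_or_gt (d x) (d' x) with hcase | hcase
      · have hnp : α * mx ^ (α-1) * (d x - mx) ≤ 0 := by
          rw [hdm]
          apply mul_nonpos_of_nonneg_of_nonpos
          · exact mul_nonneg hα0.le (Real.rpow_nonneg hmx0 _)
          · exact mul_nonpos_of_nonneg_of_nonpos hl0.le (by linarith)
        linarith
      · have hmono : mx ^ (α-1) ≤ ((1-l) * d x) ^ (α-1) :=
          Real.rpow_le_rpow_of_nonpos h1ld hmge (by linarith)
        have hmul : ((1-l) * d x) ^ (α-1) = (1-l) ^ (α-1) * d x ^ (α-1) :=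
          Real.mul_rpow h1l.le (hd0 x)
        have hda : d x ^ (α-1) * d x = d x ^ α := by
          rw [← Real.rpow_add_one hdx.ne' (α-1)]; ring_nf
        have hdd' : (0:ℝ) ≤ d x - d' x := by linarith
        have hpw : 0 ≤ (1-l) ^ (α-1) * d x ^ (α-1) :=
          mul_nonneg (Real.rpow_nonneg h1l.le _) (Real.rpow_nonneg (hd0 x) _)
        calc d x ^ α - mx ^ α ≤ α * mx ^ (α-1) * (d x - mx) := by linarith
          _ = (α * l) * (mx ^ (α-1) * (d x - d' x)) := by rw [hdm]; ring
          _ ≤ (α * l) * (((1-l) ^ (α-1) * d x ^ (α-1)) * (d x - d' x)) := by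
              apply mul_le_mul_of_nonneg_left _ (mul_nonneg hα0.le hl0.le)
              exact mul_le_mul_of_nonneg_right (hmono.trans_eq hmul) hdd'
          _ ≤ (α * l) * (((1-l) ^ (α-1) * d x ^ (α-1)) * d x) := by
              apply mul_le_mul_of_nonneg_left _ (mul_nonneg hα0.le hl0.le)
              exact mul_le_mul_of_nonneg_left (by linarith [hd'0 x]) hpw
          _ = α * l * (1-l) ^ (α-1) * d x ^ α := by
              rw [mul_assoc ((1-l) ^ (α-1)), hda]; ring
    · -- d x = 0
      rw [← hdx, Real.zero_rpow hα0.ne']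
      have : 0 ≤ mx ^ α := Real.rpow_nonneg hmx0 _
      nlinarith
  -- one-minus-l Bernoulli bound
  have hbern1 : ∀ l ∈ Set.Ioo (0:ℝ) 1, 1 - (1-l) ^ α ≤ α * (1-l) ^ (α-1) * l := by
    intro l hl
    have h1l : (0:ℝ) < 1 - l := by linarith [hl.2]
    have := rpow_tangent_le hα0.le hα1.le h1l (zero_le_one)
    rw [Real.one_rpow] at this
    have he : (1:ℝ) - (1-l) = l := by ring
    rw [he] at this
    linarith
  -- positivity of d q
  rcases (hd0 q).lt_or_eq with hdq | hdq
  case inr =>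
    -- d q = 0 : contradiction with entropy maximality
    exfalso
    have hAl : ∀ l ∈ Set.Ioo (0:ℝ) 1,
        d' q ^ α ≤ α * l ^ (1-α) * ((1-l) ^ (α-1) * K) := by
      intro l hl
      obtain ⟨hl0, hl1⟩ := hl
      have h1l : (0:ℝ) < 1 - l := by linarith
      have hsplitm := Finset.add_sum_erase Finset.univ
        (fun x => ((1-l) * d x + l * d' x) ^ α) (Finset.mem_univ q)
      have hsplitd := Finset.add_sum_erase Finset.univ
        (fun x => d x ^ α) (Finset.mem_univ q)
      have hmq : ((1-l) * d q + l * d' q) ^ α = l ^ α * d' q ^ α := by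
        rw [← hdq, mul_zero, zero_add, Real.mul_rpow hl0.le (hd'0 q)]
      have hlow : ∀ x ∈ Finset.univ.erase q,
          (1-l) ^ α * d x ^ α ≤ ((1-l) * d x + l * d' x) ^ α := by
        intro x _
        rw [← Real.mul_rpow h1l.le (hd0 x)]
        exact Real.rpow_le_rpow (mul_nonneg h1l.le (hd0 x))
          (le_add_of_nonneg_right (mul_nonneg hl0.le (hd'0 x))) hα0.le
      have hsum_low : (1-l) ^ α * ∑ x ∈ Finset.univ.erase q, d x ^ α
          ≤ ∑ x ∈ Finset.univ.erase q, ((1-l) * d x + l * d' x) ^ α := by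
        rw [Finset.mul_sum]
        exact Finset.sum_le_sum hlow
      have hdq0 : d q ^ α = 0 := by rw [← hdq, Real.zero_rpow hα0.ne']
      have hKer : ∑ x ∈ Finset.univ.erase q, d x ^ α = K := by
        rw [← hK] at hsplitd
        linarith
      have hφl := hφ l ⟨hl0, hl1⟩
      have hstep : l ^ α * d' q ^ α + (1-l) ^ α * K ≤ K := by
        rw [hmq] at hsplitm
        rw [hKer] at hsum_low
        linarith
      have hstep2 : l ^ α * d' q ^ α ≤ α * l * ((1-l) ^ (α-1) * K) := by
        have hB := hbern1 l ⟨hl0, hl1⟩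
        have h2 := mul_le_mul_of_nonneg_right hB hK0
        nlinarith
      have hlα : (0:ℝ) < l ^ α := Real.rpow_pos_of_pos hl0 α
      have hdiv : α * l ^ (1-α) * ((1-l) ^ (α-1) * K)
          = (α * l * ((1-l) ^ (α-1) * K)) / l ^ α := by
        rw [eq_div_iff hlα.ne']
        have hll : l ^ (1-α) * l ^ α = l := by
          rw [← Real.rpow_add hl0]; norm_num
        linear_combination (α * ((1-l) ^ (α-1) * K)) * hll
      rw [hdiv, le_div_iff₀ hlα]
      nlinarith [hstep2]
    have t1 : Filter.Tendsto (fun l : ℝ => l ^ (1-α)) (nhdsWithin 0 (Set.Ioi 0)) (nhds 0) := by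
      have h := (Filter.tendsto_id.mono_left nhdsWithin_le_nhds :
        Filter.Tendsto (fun l : ℝ => l) (nhdsWithin 0 (Set.Ioi 0)) (nhds 0)).rpow_const
        (Or.inr h1α.le)
      simpa [Real.zero_rpow h1α.ne'] using h
    have t2 : Filter.Tendsto (fun l : ℝ => (1-l) ^ (α-1) * K)
        (nhdsWithin 0 (Set.Ioi 0)) (nhds K) := by
      have hc : ContinuousAt (fun l : ℝ => (1-l) ^ (α-1) * K) 0 := by
        apply ContinuousAt.mul _ continuousAt_const
        exact (continuousAt_const.sub continuousAt_id).rpow_const (Or.inl (by norm_num))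
      have := hc.tendsto.mono_left (nhdsWithin_le_nhds : nhdsWithin (0:ℝ) (Set.Ioi 0) ≤ nhds 0)
      simpa [Real.one_rpow] using this
    have tot : Filter.Tendsto (fun l : ℝ => α * l ^ (1-α) * ((1-l) ^ (α-1) * K))
        (nhdsWithin 0 (Set.Ioi 0)) (nhds 0) := by
      have := (Filter.Tendsto.const_mul α t1).mul t2
      simpa using this
    have hle : d' q ^ α ≤ 0 :=
      ge_of_tendsto tot (Filter.eventually_of_mem (Ioo_mem_nhdsGT one_pos) hAl)
    exact absurd hle (not_le.mpr (Real.rpow_pos_of_pos hd'q α))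
  case inl =>
    -- main case : d q > 0
    have hBl : ∀ l ∈ Set.Ioo (0:ℝ) 1,
        (d' q - d q) * ((1-l) * d q + l * d' q) ^ (α-1)
          ≤ (1-l) ^ (α-1) * (K - d q ^ α) := by
      intro l hl
      obtain ⟨hl0, hl1⟩ := hl
      have h1l : (0:ℝ) < 1 - l := by linarith
      set mq : ℝ := (1-l) * d q + l * d' q with hmq
      have hmqpos : 0 < mq :=
        lt_of_lt_of_le (mul_pos h1l hdq) (le_add_of_nonneg_right (mul_nonneg hl0.le (hd'0 q)))
      -- claim 2 at q
      have hb := rpow_tangent_le hα0.le hα1.le hmqpos (hd0 q)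
      have he : d q - mq = -(l * (d' q - d q)) := by rw [hmq]; ring
      rw [he] at hb
      have claim2 : α * l * ((d' q - d q) * mq ^ (α-1)) ≤ mq ^ α - d q ^ α := by nlinarith
      -- sum bound
      have hsplitm := Finset.add_sum_erase Finset.univ
        (fun x => ((1-l) * d x + l * d' x) ^ α) (Finset.mem_univ q)
      have hsplitd := Finset.add_sum_erase Finset.univ
        (fun x => d x ^ α) (Finset.mem_univ q)
      have herase : ∑ x ∈ Finset.univ.erase q, (d x ^ α - ((1-l) * d x + l * d' x) ^ α)
          ≤ α * l * (1-l) ^ (α-1) * ∑ x ∈ Finset.univ.erase q, d x ^ α := by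
        rw [Finset.mul_sum]
        exact Finset.sum_le_sum fun x _ => hpt l ⟨hl0, hl1⟩ x
      rw [Finset.sum_sub_distrib] at herase
      have hφl := hφ l ⟨hl0, hl1⟩
      have hKer : ∑ x ∈ Finset.univ.erase q, d x ^ α = K - d q ^ α := by
        rw [← hK] at hsplitd
        linarith
      have hsum2 : mq ^ α - d q ^ α ≤ α * l * (1-l) ^ (α-1) * (K - d q ^ α) := by
        rw [hKer] at herase
        rw [← hmq] at hsplitm
        linarith
      have hfin : α * l * ((d' q - d q) * mq ^ (α-1))
          ≤ α * l * ((1-l) ^ (α-1) * (K - d q ^ α)) := by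
        calc α * l * ((d' q - d q) * mq ^ (α-1)) ≤ mq ^ α - d q ^ α := claim2
          _ ≤ α * l * (1-l) ^ (α-1) * (K - d q ^ α) := hsum2
          _ = α * l * ((1-l) ^ (α-1) * (K - d q ^ α)) := by ring
      exact le_of_mul_le_mul_left hfin (mul_pos hα0 hl0)
    -- take the limit l → 0⁺
    have lim1 : Filter.Tendsto (fun l : ℝ => (d' q - d q) * ((1-l) * d q + l * d' q) ^ (α-1))
        (nhdsWithin 0 (Set.Ioi 0)) (nhds ((d' q - d q) * d q ^ (α-1))) := by
      have hc : ContinuousAt (fun l : ℝ => (1-l) * d q + l * d' q) 0 := by fun_prop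
      have hval : ((1:ℝ)-0) * d q + 0 * d' q = d q := by ring
      have hc2 : ContinuousAt (fun l : ℝ => ((1-l) * d q + l * d' q) ^ (α-1)) 0 := by
        apply hc.rpow_const
        left
        rw [hval]
        exact hdq.ne'
      have hc3 : ContinuousAt
          (fun l : ℝ => (d' q - d q) * ((1-l) * d q + l * d' q) ^ (α-1)) 0 :=
        continuousAt_const.mul hc2
      have := hc3.tendsto.mono_left (nhdsWithin_le_nhds : nhdsWithin (0:ℝ) (Set.Ioi 0) ≤ nhds 0)
      simpa using this
    have lim2 : Filter.Tendsto (fun l : ℝ => (1-l) ^ (α-1) * (K - d q ^ α))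
        (nhdsWithin 0 (Set.Ioi 0)) (nhds (K - d q ^ α)) := by
      have hc : ContinuousAt (fun l : ℝ => (1-l) ^ (α-1) * (K - d q ^ α)) 0 := by
        apply ContinuousAt.mul _ continuousAt_const
        exact (continuousAt_const.sub continuousAt_id).rpow_const (Or.inl (by norm_num))
      have := hc.tendsto.mono_left (nhdsWithin_le_nhds : nhdsWithin (0:ℝ) (Set.Ioi 0) ≤ nhds 0)
      simpa [Real.one_rpow] using this
    have hB : (d' q - d q) * d q ^ (α-1) ≤ K - d q ^ α :=
      le_of_tendsto_of_tendsto lim1 lim2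
        (Filter.eventually_of_mem (Ioo_mem_nhdsGT one_pos) hBl)
    have hdd : d q ^ (α-1) * d q = d q ^ α := by
      rw [← Real.rpow_add_one hdq.ne' (α-1)]; ring_nf
    have hB' : d' q * d q ^ (α-1) ≤ K := by nlinarith
    -- bound on K
    have : Nonempty X := ⟨q⟩
    set N : ℝ := (Fintype.card X : ℝ) with hN
    have hNpos : 0 < N := by rw [hN]; exact_mod_cast Fintype.card_pos
    have hNinv : (0:ℝ) < N⁻¹ := inv_pos.mpr hNpos
    have hC : K ≤ N ^ (1-α) := by
      have hsum : K ≤ ∑ _x : X, N⁻¹ ^ α + α * N⁻¹ ^ (α-1) * ∑ x : X, (d x - N⁻¹) := by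
        rw [hK, Finset.mul_sum, ← Finset.sum_add_distrib]
        exact Finset.sum_le_sum fun x _ => rpow_tangent_le hα0.le hα1.le hNinv (hd0 x)
      have hzero : ∑ x : X, (d x - N⁻¹) = 0 := by
        rw [Finset.sum_sub_distrib, hd1, Finset.sum_const, Finset.card_univ, nsmul_eq_mul,
          ← hN, mul_inv_cancel₀ hNpos.ne']
        ring
      have hconst : ∑ _x : X, N⁻¹ ^ α = N * N⁻¹ ^ α := by
        rw [Finset.sum_const, Finset.card_univ, nsmul_eq_mul, ← hN]
      have hNN : N * N⁻¹ ^ α = N ^ (1-α) := by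
        rw [Real.inv_rpow hNpos.le, Real.rpow_sub hNpos, Real.rpow_one, div_eq_mul_inv]
      rw [hzero, mul_zero, add_zero, hconst, hNN] at hsum
      exact hsum
    -- combine
    have hD : d' q ≤ (N * d q) ^ (1-α) := by
      have h5 : d' q * d q ^ (α-1) * d q ^ (1-α) ≤ N ^ (1-α) * d q ^ (1-α) :=
        mul_le_mul_of_nonneg_right (hB'.trans hC) (Real.rpow_nonneg (hd0 q) _)
      have hx : d q ^ (α-1) * d q ^ (1-α) = 1 := by
        rw [← Real.rpow_add hdq]
        norm_num
      rw [mul_assoc, hx, mul_one, ← Real.mul_rpow hNpos.le (hd0 q)] at h5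
      exact h5
    have hE : d' q ^ (1-α)⁻¹ ≤ N * d q := by
      have h6 := Real.rpow_le_rpow (hd'0 q) hD (inv_nonneg.mpr h1α.le)
      rwa [← Real.rpow_mul (mul_nonneg hNpos.le (hd0 q)), mul_inv_cancel₀ h1α.ne',
        Real.rpow_one] at h6
    have h7 : δ ^ (α/(1-α)) ≤ d' q ^ (α/(1-α)) :=
      Real.rpow_le_rpow hδ.le hq (div_nonneg hα0.le h1α.le)
    calc d' q * δ ^ (α/(1-α)) ≤ d' q * d' q ^ (α/(1-α)) :=
          mul_le_mul_of_nonneg_left h7 (hd'0 q)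
      _ = d' q ^ (1-α)⁻¹ := by
          nth_rw 1 [← Real.rpow_one (d' q)]
          rw [← Real.rpow_add hd'q]
          congr 1
          field_simp
          ring
      _ ≤ N * d q := hE

/-- **Occupancy ratio bound for the max-Rényi exploration mixture (Lemma B.3).**
If `π^{(t)}` maximizes the Rényi entropy of the step-`t` occupancy for each `t`, and
`μ_h = (1/H) ∑_t d_h^{π^{(t)}}`, then every policy `π'` with `d_h^{π'}(s,a) ≥ δ`
satisfies `d_h^{π'}(s,a) ≤ (S·A·H / δ^{α/(1-α)}) · μ_h(s,a)`. -/
theorem max_renyi_occupancy_ratio_bound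
    (S A : Type) [Fintype S] [Fintype A]
    (H : ℕ) (P : ℕ → S → A → S → ℝ) (μ : S → ℝ)
    (hP : ∀ h s a, (∀ s', 0 ≤ P h s a s') ∧ ∑ s', P h s a s' = 1)
    (hμ : (∀ s, 0 ≤ μ s) ∧ ∑ s, μ s = 1)
    (α δ : ℝ) (hα : α ∈ Set.Ioo (0 : ℝ) 1) (hδ : 0 < δ)
    (πt : Fin H → EpiPolicy S A)
    (hmax : ∀ t : Fin H, ∀ π' : EpiPolicy S A,
      renyiEnt α (occ P μ π' t) ≤ renyiEnt α (occ P μ (πt t) t)) :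
    ∀ (h : Fin H) (q : S × A) (π' : EpiPolicy S A), δ ≤ occ P μ π' h q →
      occ P μ π' h q ≤
        ((Fintype.card S : ℝ) * (Fintype.card A) * H / δ ^ (α / (1 - α))) *
          ((1 / (H : ℝ)) * ∑ t : Fin H, occ P μ (πt t) h q) := by
  obtain ⟨hα0, hα1⟩ := hα
  have h1α : (0:ℝ) < 1 - α := by linarith
  obtain ⟨hμ0, hμ1⟩ := hμ
  have hP0 : ∀ h s a s', 0 ≤ P h s a s' := fun h s a s' => (hP h s a).1 s'
  have hP1 : ∀ h s a, ∑ s', P h s a s' = 1 := fun h s a => (hP h s a).2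
  intro h q π' hδq
  haveI : Nonempty S := ⟨q.1⟩
  haveI : Nonempty A := ⟨q.2⟩
  have hdnn : ∀ x, 0 ≤ occ P μ (πt h) (h:ℕ) x :=
    fun x => occ_nonneg P μ (πt h) hP0 hμ0 _ x
  have hd'nn : ∀ x, 0 ≤ occ P μ π' (h:ℕ) x :=
    fun x => occ_nonneg P μ π' hP0 hμ0 _ x
  have hdsum : ∑ x, occ P μ (πt h) (h:ℕ) x = 1 := occ_sum_one P μ (πt h) hP1 hμ1 _
  have hd'sum : ∑ x, occ P μ π' (h:ℕ) x = 1 := occ_sum_one P μ π' hP1 hμ1 _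
  have hφ : ∀ l ∈ Set.Ioo (0:ℝ) 1,
      ∑ x, ((1-l) * occ P μ (πt h) (h:ℕ) x + l * occ P μ π' (h:ℕ) x) ^ α
        ≤ ∑ x, occ P μ (πt h) (h:ℕ) x ^ α := by
    intro l hl
    obtain ⟨πm, hπm⟩ := mix_occ P μ hP0 hμ0 (πt h) π' l hl.1.le hl.2.le
    have hmaxl := hmax h πm
    simp only [renyiEnt] at hmaxl
    have hsum_eq : ∑ x, occ P μ πm (h:ℕ) x ^ α
        = ∑ x, ((1-l) * occ P μ (πt h) (h:ℕ) x + l * occ P μ π' (h:ℕ) x) ^ α :=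
      Finset.sum_congr rfl fun x _ => by rw [hπm]
    rw [hsum_eq] at hmaxl
    have hmnn : ∀ x, 0 ≤ (1-l) * occ P μ (πt h) (h:ℕ) x + l * occ P μ π' (h:ℕ) x :=
      fun x => add_nonneg (mul_nonneg (by linarith [hl.2] : (0:ℝ) ≤ 1 - l) (hdnn x))
        (mul_nonneg hl.1.le (hd'nn x))
    have hMpos : 0 < ∑ x, ((1-l) * occ P μ (πt h) (h:ℕ) x + l * occ P μ π' (h:ℕ) x) ^ α := by
      have hm1 : ∑ x, ((1-l) * occ P μ (πt h) (h:ℕ) x + l * occ P μ π' (h:ℕ) x) = 1 := by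
        rw [Finset.sum_add_distrib, ← Finset.mul_sum, ← Finset.mul_sum, hdsum, hd'sum]
        ring
      have hlt : (∑ _x : S × A, (0:ℝ)) < ∑ x, ((1-l) * occ P μ (πt h) (h:ℕ) x
          + l * occ P μ π' (h:ℕ) x) := by
        rw [hm1, Finset.sum_const]
        simp
      obtain ⟨x0, _, hx0⟩ := Finset.exists_lt_of_sum_lt hlt
      calc (0:ℝ) < ((1-l) * occ P μ (πt h) (h:ℕ) x0 + l * occ P μ π' (h:ℕ) x0) ^ α :=
            Real.rpow_pos_of_pos hx0 α
        _ ≤ _ := Finset.single_le_sum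
            (fun x _ => Real.rpow_nonneg (hmnn x) α) (Finset.mem_univ x0)
    have hDpos : 0 < ∑ x, occ P μ (πt h) (h:ℕ) x ^ α := by
      have hlt : (∑ _x : S × A, (0:ℝ)) < ∑ x, occ P μ (πt h) (h:ℕ) x := by
        rw [hdsum, Finset.sum_const]
        simp
      obtain ⟨x0, _, hx0⟩ := Finset.exists_lt_of_sum_lt hlt
      calc (0:ℝ) < occ P μ (πt h) (h:ℕ) x0 ^ α := Real.rpow_pos_of_pos hx0 α
        _ ≤ _ := Finset.single_le_sum
            (fun x _ => Real.rpow_nonneg (hdnn x) α) (Finset.mem_univ x0)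
    have hlog := (mul_le_mul_iff_right₀ (by positivity : (0:ℝ) < 1 / (1-α))).mp hmaxl
    exact (Real.log_le_log_iff hMpos hDpos).mp hlog
  have hkey := key_ineq α δ ⟨hα0, hα1⟩ hδ (occ P μ (πt h) (h:ℕ)) (occ P μ π' (h:ℕ))
    hdnn hd'nn hdsum hφ q hδq
  have hcard : ((Fintype.card (S × A) : ℝ)) = (Fintype.card S : ℝ) * (Fintype.card A : ℝ) := by
    rw [Fintype.card_prod]
    push_cast
    ring
  rw [hcard] at hkey
  have hHpos : (0:ℝ) < H := by exact_mod_cast h.pos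
  have hsumt : occ P μ (πt h) (h:ℕ) q ≤ ∑ t : Fin H, occ P μ (πt t) (h:ℕ) q :=
    Finset.single_le_sum (fun t _ => occ_nonneg P μ (πt t) hP0 hμ0 (h:ℕ) q) (Finset.mem_univ h)
  have hδγ : (0:ℝ) < δ ^ (α/(1-α)) := Real.rpow_pos_of_pos hδ _
  have hNA : (0:ℝ) ≤ (Fintype.card S : ℝ) * (Fintype.card A : ℝ) := by positivity
  have hfin : occ P μ π' (h:ℕ) q
      ≤ ((Fintype.card S : ℝ) * (Fintype.card A : ℝ)) * occ P μ (πt h) (h:ℕ) q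
        / δ ^ (α/(1-α)) := by
    rw [le_div_iff₀ hδγ]
    exact hkey
  calc occ P μ π' (h:ℕ) q
      ≤ ((Fintype.card S : ℝ) * (Fintype.card A : ℝ)) * occ P μ (πt h) (h:ℕ) q
        / δ ^ (α/(1-α)) := hfin
    _ ≤ ((Fintype.card S : ℝ) * (Fintype.card A : ℝ)) * (∑ t : Fin H, occ P μ (πt t) (h:ℕ) q)
        / δ ^ (α/(1-α)) := by
        gcongr
    _ = ((Fintype.card S : ℝ) * (Fintype.card A) * H / δ ^ (α / (1 - α))) *
          ((1 / (H : ℝ)) * ∑ t : Fin H, occ P μ (πt t) (h:ℕ) q) := by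
        field_simp
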